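/- Let n ≥ 2 be an integer, q > 0, and a_2, …, a_n ≥ 0 with a_n > 0, and for r > 0 let E(r) > 0 be the unique solution of (1 + Σ_{k=2}^n (k a_k / 2^{k−1}) E^{2(k−1)}) E = q/r². Then lim_{r→∞} r² E(r) = q (Coulomb behavior at infinity) and lim_{r→0⁺} r^{2/(2n−1)} E(r) = (2^{n−1} q / (n a_n))^{1/(2n−1)} (relegated singularity at the origin). -/

import Mathlib

open Topology Filter

set_option maxHeartbeats 1000000

/-- Asymptotics of the radial electric field of a point charge in the polynomial model:
Coulomb behavior `E(r) ~ q/r²` at infinity and the relegated singularity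
`E(r) ~ (2^{n-1} q/(n a_n))^{1/(2n-1)} r^{-2/(2n-1)}` at the origin. -/
theorem stmt2 (n : ℕ) (hn : 2 ≤ n) (q : ℝ) (hq : 0 < q)
    (a : ℕ → ℝ) (ha : ∀ k, 2 ≤ k → k ≤ n → 0 ≤ a k) (han : 0 < a n)
    (E : ℝ → ℝ) (hE : ∀ r, 0 < r → 0 < E r)
    (heq : ∀ r, 0 < r →
      (1 + ∑ k ∈ Finset.Icc 2 n, ((k : ℝ) * a k / 2 ^ (k - 1)) * E r ^ (2 * (k - 1))) * E r
        = q / r ^ 2) :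
    Tendsto (fun r => r ^ 2 * E r) atTop (𝓝 q) ∧
    Tendsto (fun r => r ^ ((2 : ℝ) / (2 * (n : ℝ) - 1)) * E r) (𝓝[>] (0 : ℝ))
      (𝓝 (((2 : ℝ) ^ (n - 1) * q / ((n : ℝ) * a n)) ^ ((1 : ℝ) / (2 * (n : ℝ) - 1)))) := by
  have hn0 : (0:ℝ) < n := by exact_mod_cast (by omega : 0 < n)
  set c : ℕ → ℝ := fun k => (k : ℝ) * a k / 2 ^ (k - 1) with hcdef
  set S : ℝ → ℝ := fun x => ∑ k ∈ Finset.Icc 2 n, c k * x ^ (2 * (k - 1)) with hSdef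
  have heq' : ∀ r, 0 < r → (1 + S (E r)) * E r = q / r ^ 2 := heq
  have hck : ∀ k ∈ Finset.Icc 2 n, 0 ≤ c k := by
    intro k hk
    rw [Finset.mem_Icc] at hk
    have := ha k hk.1 hk.2
    simp only [hcdef]
    positivity
  have hcn : 0 < c n := by
    simp only [hcdef]
    exact div_pos (mul_pos hn0 han) (by positivity)
  have hS0 : ∀ x : ℝ, 0 ≤ x → 0 ≤ S x := fun x hx =>
    Finset.sum_nonneg fun k hk => mul_nonneg (hck k hk) (pow_nonneg hx _)
  have hSmono : ∀ x y : ℝ, 0 ≤ x → x ≤ y → S x ≤ S y := fun x y hx hxy =>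
    Finset.sum_le_sum fun k hk => mul_le_mul_of_nonneg_left (pow_le_pow_left₀ hx hxy _) (hck k hk)
  -- Part 1
  have hq0 : Tendsto (fun r : ℝ => q / r ^ 2) atTop (𝓝 0) :=
    tendsto_const_nhds.div_atTop (tendsto_pow_atTop two_ne_zero)
  have hE0 : Tendsto E atTop (𝓝 0) := by
    refine tendsto_of_tendsto_of_tendsto_of_le_of_le' tendsto_const_nhds hq0 ?_ ?_
    · filter_upwards [eventually_gt_atTop (0:ℝ)] with r hr using (hE r hr).le
    · filter_upwards [eventually_gt_atTop (0:ℝ)] with r hr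
      have h := heq' r hr
      nlinarith [mul_nonneg (hS0 (E r) (hE r hr).le) (hE r hr).le]
  have hScont : Continuous S := by
    apply continuous_finset_sum
    intro k _
    exact continuous_const.mul (continuous_pow _)
  have hS00 : S 0 = 0 := by
    apply Finset.sum_eq_zero
    intro k hk
    rw [Finset.mem_Icc] at hk
    rw [zero_pow (by omega), mul_zero]
  have hfac1 : Tendsto (fun r => 1 + S (E r)) atTop (𝓝 1) := by
    have h := (hScont.tendsto 0).comp hE0
    rw [hS00] at h
    simpa using tendsto_const_nhds.add h
  have part1 : Tendsto (fun r => r ^ 2 * E r) atTop (𝓝 q) := by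
    have h := Tendsto.div (tendsto_const_nhds (x := q)) hfac1 one_ne_zero
    rw [div_one] at h
    refine h.congr' ?_
    filter_upwards [eventually_gt_atTop (0:ℝ)] with r hr
    have h1 := heq' r hr
    have h2 : 0 < 1 + S (E r) := by linarith [hS0 (E r) (hE r hr).le]
    simp only [Pi.div_apply]
    rw [div_eq_iff h2.ne']
    field_simp at h1
    linear_combination -h1
  -- Part 2
  have hr2 : Tendsto (fun r : ℝ => q / r ^ 2) (𝓝[>] (0:ℝ)) atTop := by
    have h1 : Tendsto (fun r : ℝ => r ^ 2) (𝓝[>] (0:ℝ)) (𝓝[>] (0:ℝ)) := by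
      rw [tendsto_nhdsWithin_iff]
      constructor
      · exact ((continuous_pow 2).tendsto' 0 0 (by simp)).mono_left nhdsWithin_le_nhds
      · filter_upwards [self_mem_nhdsWithin] with r hr using pow_pos (show (0:ℝ) < r from hr) 2
    have h2 := tendsto_inv_nhdsGT_zero.comp h1
    simpa [div_eq_mul_inv, Function.comp] using h2.const_mul_atTop hq
  have hEat : Tendsto E (𝓝[>] (0:ℝ)) atTop := by
    rw [tendsto_atTop]
    intro M
    filter_upwards [hr2.eventually_gt_atTop ((1 + S (max M 0)) * max M 0), self_mem_nhdsWithin]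
      with r h1 hr
    by_contra hlt
    push_neg at hlt
    have hEM : E r ≤ max M 0 := le_trans hlt.le (le_max_left _ _)
    have h3 : (1 + S (E r)) * E r ≤ (1 + S (max M 0)) * max M 0 :=
      mul_le_mul (by linarith [hSmono (E r) (max M 0) (hE r hr).le hEM]) hEM (hE r hr).le
        (by linarith [hS0 (max M 0) (le_max_right _ _)])
    rw [heq' r hr] at h3
    linarith
  have hD : Tendsto (fun x : ℝ => (1 + S x) / x ^ (2 * (n - 1))) atTop (𝓝 (c n)) := by
    have hsum : Tendsto
        (fun x : ℝ => ∑ k ∈ Finset.Icc 2 n, c k * x ^ (2 * (k - 1)) / x ^ (2 * (n - 1)))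
        atTop (𝓝 (∑ k ∈ Finset.Icc 2 n, if k = n then c n else 0)) := by
      apply tendsto_finset_sum
      intro k hk
      rw [Finset.mem_Icc] at hk
      by_cases hkn : k = n
      · have hkeq : (if k = n then c n else 0) = c n := if_pos hkn
        rw [hkeq, hkn]
        refine Tendsto.congr' ?_ (tendsto_const_nhds (x := c n))
        filter_upwards [eventually_gt_atTop (0:ℝ)] with x hx
        rw [mul_div_assoc, div_self (pow_ne_zero _ hx.ne'), mul_one]
      · simp only [if_neg hkn]
        have hkln : k < n := lt_of_le_of_ne hk.2 hkn
        have hlim := ((tendsto_pow_atTop (n := 2 * (n - k)) (by omega)).inv_tendsto_atTop).const_mul (c k)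
        rw [mul_zero] at hlim
        refine Tendsto.congr' ?_ hlim
        filter_upwards [eventually_gt_atTop (0:ℝ)] with x hx
        simp only [Pi.inv_apply]
        have hsplit : x ^ (2 * (n - 1)) = x ^ (2 * (k - 1)) * x ^ (2 * (n - k)) := by
          rw [← pow_add]; congr 1; omega
        rw [mul_div_assoc, hsplit, div_mul_eq_div_div, div_self (pow_ne_zero _ hx.ne'), one_div]
    have hifsum : (∑ k ∈ Finset.Icc 2 n, if k = n then c n else 0) = c n := by
      rw [Finset.sum_ite_eq' (Finset.Icc 2 n) n (fun _ => c n)]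
      simp [hn]
    rw [hifsum] at hsum
    have hrest : Tendsto (fun x : ℝ => (x ^ (2 * (n - 1)))⁻¹) atTop (𝓝 0) :=
      (tendsto_pow_atTop (by omega)).inv_tendsto_atTop
    have hadd := hrest.add hsum
    rw [zero_add] at hadd
    refine Tendsto.congr' ?_ hadd
    filter_upwards [eventually_gt_atTop (0:ℝ)] with x hx
    rw [add_div, Finset.sum_div, one_div]
  have hpsi : Tendsto (fun x : ℝ => q * x ^ (2 * (n - 1)) / (1 + S x)) atTop (𝓝 (q / c n)) := by
    have h := Tendsto.div (tendsto_const_nhds (x := q)) hD hcn.ne'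
    refine h.congr' ?_
    filter_upwards [eventually_gt_atTop (0:ℝ)] with x hx
    simp only [Pi.div_apply]
    rw [div_div_eq_mul_div]
  have hcomp : Tendsto (fun r => q * (E r) ^ (2 * (n - 1)) / (1 + S (E r))) (𝓝[>] (0:ℝ))
      (𝓝 (q / c n)) := hpsi.comp hEat
  set d : ℝ := 2 * (n:ℝ) - 1 with hd
  have hn2 : (2:ℝ) ≤ (n:ℝ) := by exact_mod_cast hn
  have hd0 : 0 < d := by rw [hd]; linarith
  have hqc : 0 < q / c n := div_pos hq hcn
  have hrpow : Tendsto
      (fun r => (q * (E r) ^ (2 * (n - 1)) / (1 + S (E r))) ^ ((1:ℝ)/d)) (𝓝[>] (0:ℝ))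
      (𝓝 ((q / c n) ^ ((1:ℝ)/d))) :=
    ((Real.continuousAt_rpow_const _ _ (Or.inl hqc.ne')).tendsto).comp hcomp
  have hbase : (q / c n) ^ ((1:ℝ)/d) = ((2:ℝ) ^ (n - 1) * q / ((n : ℝ) * a n)) ^ ((1:ℝ)/d) := by
    congr 1
    simp only [hcdef]
    rw [div_div_eq_mul_div]
    ring
  have part2 : Tendsto (fun r => r ^ ((2 : ℝ) / d) * E r) (𝓝[>] (0 : ℝ))
      (𝓝 (((2 : ℝ) ^ (n - 1) * q / ((n : ℝ) * a n)) ^ ((1 : ℝ) / d))) := by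
    rw [← hbase]
    refine hrpow.congr' ?_
    filter_upwards [self_mem_nhdsWithin] with r hr
    have hr0 : (0:ℝ) < r := hr
    have he : 0 < E r := hE r hr0
    have h2 : 0 < 1 + S (E r) := by linarith [hS0 (E r) he.le]
    have h3 : (1 + S (E r)) * E r * r ^ 2 = q := by
      rw [heq' r hr0]; field_simp
    have hA : q * (E r) ^ (2 * (n - 1)) / (1 + S (E r)) = r ^ 2 * (E r) ^ (2 * (n - 1) + 1) := by
      rw [div_eq_iff h2.ne']
      calc q * (E r) ^ (2 * (n - 1))
          = ((1 + S (E r)) * E r * r ^ 2) * (E r) ^ (2 * (n - 1)) := by rw [h3]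
        _ = r ^ 2 * (E r) ^ (2 * (n - 1) + 1) * (1 + S (E r)) := by ring
    rw [hA]
    have hcast : ((2 * (n - 1) + 1 : ℕ) : ℝ) = d := by
      rw [hd]
      have h1n : 1 ≤ n := by omega
      push_cast [h1n]
      ring
    rw [Real.mul_rpow (by positivity) (by positivity),
      ← Real.rpow_natCast r 2, ← Real.rpow_mul hr0.le,
      ← Real.rpow_natCast (E r) (2 * (n - 1) + 1), ← Real.rpow_mul he.le, hcast]
    rw [mul_one_div, mul_one_div, div_self hd0.ne', Real.rpow_one]
    norm_num
  exact ⟨part1, part2⟩
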